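/- For three non-collinear points p_1, p_2, p_3 in ℝ², the 3×6 matrix B(3) whose rows are (−r_12ᵀ, r_12ᵀ, 0), (−r_13ᵀ, 0, r_13ᵀ), (0, −r_23ᵀ, r_23ᵀ), where r_ij = (p_ij^y, −p_ij^x)ᵀ is the 90°-rotation of p_j − p_i, has rank 3. -/

import Mathlib

open Matrix

/-- 90° rotation of the relative position vector: `r = (p_ij^y, -p_ij^x)`. -/
def rvec (p q : Fin 2 → ℝ) : Fin 2 → ℝ := ![q 1 - p 1, -(q 0 - p 0)]

/-- The reduced bearing rigidity matrix `B(3)` for three points in the plane. -/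
def B3 (p : Fin 3 → (Fin 2 → ℝ)) : Matrix (Fin 3) (Fin 3 × Fin 2) ℝ :=
  Matrix.of fun e jk =>
    (if jk.1 = (![1, 2, 2] : Fin 3 → Fin 3) e then 1
     else if jk.1 = (![0, 0, 1] : Fin 3 → Fin 3) e then -1 else 0) *
      rvec (p ((![0, 0, 1] : Fin 3 → Fin 3) e)) (p ((![1, 2, 2] : Fin 3 → Fin 3) e)) jk.2

lemma det_ne_of_not_collinear (p : Fin 3 → (Fin 2 → ℝ))
    (hcol : ¬ Collinear ℝ (Set.range p)) :
    (p 1 0 - p 0 0) * (p 2 1 - p 0 1) - (p 1 1 - p 0 1) * (p 2 0 - p 0 0) ≠ 0 := by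
  intro hD
  apply hcol
  rw [collinear_iff_of_mem (Set.mem_range_self 0)]
  by_cases ha : p 1 0 - p 0 0 = 0 ∧ p 1 1 - p 0 1 = 0
  · refine ⟨p 2 - p 0, ?_⟩
    rintro _ ⟨i, rfl⟩
    fin_cases i
    · exact ⟨0, by funext j; simp⟩
    · exact ⟨0, by funext j; fin_cases j <;>
        simp only [Pi.sub_apply, zero_smul, Pi.smul_apply, smul_eq_mul, Pi.add_apply,
          Pi.vadd_apply] <;> simp <;> linarith [ha.1, ha.2]⟩
    · exact ⟨1, by funext j; fin_cases j <;>
        simp only [Pi.sub_apply, one_smul, Pi.smul_apply, smul_eq_mul, Pi.add_apply,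
          Pi.vadd_apply] <;> simp <;> ring⟩
  · refine ⟨p 1 - p 0, ?_⟩
    rintro _ ⟨i, rfl⟩
    fin_cases i
    · exact ⟨0, by funext j; simp⟩
    · exact ⟨1, by funext j; fin_cases j <;>
        simp only [Pi.sub_apply, one_smul, Pi.smul_apply, smul_eq_mul, Pi.add_apply,
          Pi.vadd_apply] <;> simp <;> ring⟩
    · by_cases h0 : p 1 0 - p 0 0 = 0
      · have h1 : p 1 1 - p 0 1 ≠ 0 := fun h => ha ⟨h0, h⟩
        refine ⟨(p 2 1 - p 0 1) / (p 1 1 - p 0 1), ?_⟩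
        funext j; fin_cases j <;>
          simp only [Pi.sub_apply, Pi.smul_apply, smul_eq_mul, Pi.add_apply, Pi.vadd_apply] <;>
          simp <;> field_simp <;> nlinarith [hD, h0]
      · refine ⟨(p 2 0 - p 0 0) / (p 1 0 - p 0 0), ?_⟩
        funext j; fin_cases j <;>
          simp only [Pi.sub_apply, Pi.smul_apply, smul_eq_mul, Pi.add_apply, Pi.vadd_apply] <;>
          simp <;> field_simp <;> nlinarith [hD]

theorem B3_rank (p : Fin 3 → (Fin 2 → ℝ))
    (hcol : ¬ Collinear ℝ (Set.range p)) :
    (B3 p).rank = 3 := by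
  have hD := det_ne_of_not_collinear p hcol
  rw [← Matrix.rank_transpose, Matrix.rank]
  have hinj : Function.Injective (B3 p)ᵀ.mulVecLin := by
    rw [← LinearMap.ker_eq_bot, LinearMap.ker_eq_bot']
    intro v hv
    have h := fun jk => congrFun hv jk
    simp only [Matrix.mulVecLin_apply, Matrix.mulVec, dotProduct, Matrix.transpose_apply,
      Fin.sum_univ_three, B3, rvec, Matrix.of_apply, Pi.zero_apply] at h
    have e1 := h (1, 0)
    have e2 := h (1, 1)
    have e3 := h (2, 0)
    have e4 := h (2, 1)
    norm_num [Fin.ext_iff, Matrix.cons_val_zero, Matrix.cons_val_one, Matrix.cons_val_two] at e1 e2 e3 e4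
    funext i
    have hv2 : v 2 = 0 := by
      rcases mul_eq_zero.mp (show v 2 * ((p 1 0 - p 0 0) * (p 2 1 - p 0 1) -
          (p 1 1 - p 0 1) * (p 2 0 - p 0 0)) = 0 by
        linear_combination (-(p 1 0 - p 0 0)) * e1 - (p 1 1 - p 0 1) * e2) with h' | h'
      · exact h'
      · exact absurd h' hD
    simp only [hv2, mul_zero, add_zero] at e1 e2 e3 e4
    have hv0 : v 0 = 0 := by
      rcases mul_eq_zero.mp (show v 0 * ((p 1 0 - p 0 0) * (p 2 1 - p 0 1) -
          (p 1 1 - p 0 1) * (p 2 0 - p 0 0)) = 0 by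
        linear_combination (-(p 2 1 - p 0 1)) * e2 - (p 2 0 - p 0 0) * e1) with h' | h'
      · exact h'
      · exact absurd h' hD
    have hv1 : v 1 = 0 := by
      rcases mul_eq_zero.mp (show v 1 * ((p 1 0 - p 0 0) * (p 2 1 - p 0 1) -
          (p 1 1 - p 0 1) * (p 2 0 - p 0 0)) = 0 by
        linear_combination (p 1 0 - p 0 0) * e3 + (p 1 1 - p 0 1) * e4) with h' | h'
      · exact h'
      · exact absurd h' hD
    fin_cases i <;> assumption
  rw [LinearMap.finrank_range_of_inj hinj, Module.finrank_fin_fun]
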